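/- For every positive integer n, the following identity of rational functions in q holds: ∑_{k=1}^{n} ( (-1)^k (1 + 3q^k + q^{2k}) · q^{−C(k,2)} / ((1+q^k) · [k]_q^2) ) · binom_q(2k, k) = ∑_{k=1}^{n} ( (-1)^k (1+q^k) · q^{−C(k,2)} / [k]_q^2 ) · binom_q(n+k, k) · binom_q(n, k)^{−1} − ∑_{k=1}^{n} q^k / [k]_q^2. -/

import Mathlib

open Polynomial Finset

noncomputable section

/-- The `q`-integer `[n]_q = 1 + q + ⋯ + q^(n-1)`, as a polynomial in `ℚ[q]`. -/
def qIntP (n : ℕ) : Polynomial ℚ := ∑ i ∈ Finset.range n, X ^ i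

/-- The `q`-integer `[n]_q` viewed in the field of rational functions `ℚ(q)`. -/
def qN (n : ℕ) : RatFunc ℚ := algebraMap (Polynomial ℚ) (RatFunc ℚ) (qIntP n)

/-- The `q`-Pochhammer symbol `(q; q)_n = ∏_{j=1}^{n} (1 - q^j)` in `ℚ(q)`. -/
def qqPoch (n : ℕ) : RatFunc ℚ :=
  algebraMap (Polynomial ℚ) (RatFunc ℚ) (∏ j ∈ Finset.range n, (1 - X ^ (j + 1)))

/-- The `q`-Pochhammer symbol `(-q; q)_n = ∏_{j=1}^{n} (1 + q^j)` in `ℚ(q)`. -/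
def nqPoch (n : ℕ) : RatFunc ℚ :=
  algebraMap (Polynomial ℚ) (RatFunc ℚ) (∏ j ∈ Finset.range n, (1 + X ^ (j + 1)))

/-- The Gaussian `q`-binomial coefficient, as a rational function. -/
def qbin (n k : ℕ) : RatFunc ℚ :=
  if k ≤ n then qqPoch n / (qqPoch k * qqPoch (n - k)) else 0

/-- `qCong p r x y` means `x ≡ y (mod [p]_q^r)`: the difference `x - y` can be
written as a fraction whose numerator (a polynomial) is divisible by `[p]_q^r`
and whose denominator is relatively prime to `[p]_q`. -/
def qCong (p r : ℕ) (x y : RatFunc ℚ) : Prop :=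
  ∃ a b : Polynomial ℚ, IsCoprime b (qIntP p) ∧
    (x - y) * algebraMap (Polynomial ℚ) (RatFunc ℚ) b =
      algebraMap (Polynomial ℚ) (RatFunc ℚ) (qIntP p ^ r * a)

lemma amap_ne {p : Polynomial ℚ} (hp : p ≠ 0) :
    algebraMap (Polynomial ℚ) (RatFunc ℚ) p ≠ 0 :=
  fun h => hp (RatFunc.algebraMap_injective ℚ (by simpa using h))

lemma sub_pow_ne {j : ℕ} (hj : j ≠ 0) : (1 : RatFunc ℚ) - RatFunc.X ^ j ≠ 0 := by
  have h1 : (1 - X ^ j : Polynomial ℚ) ≠ 0 := by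
    intro h
    have := congrArg (Polynomial.eval 0) h
    simp [zero_pow hj] at this
  have := amap_ne h1
  simpa [map_sub, map_pow] using this

lemma add_pow_ne (j : ℕ) : (1 : RatFunc ℚ) + RatFunc.X ^ j ≠ 0 := by
  have h1 : (1 + X ^ j : Polynomial ℚ) ≠ 0 := by
    intro h
    have := congrArg (Polynomial.eval 1) h
    simp at this
  have := amap_ne h1
  simpa [map_add, map_pow] using this

lemma qqPoch_zero : qqPoch 0 = 1 := by simp [qqPoch]

lemma qqPoch_succ (n : ℕ) : qqPoch (n+1) = qqPoch n * (1 - RatFunc.X ^ (n+1)) := by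
  simp [qqPoch, Finset.prod_range_succ, map_mul, map_sub, map_pow]

lemma qqPoch_ne (n : ℕ) : qqPoch n ≠ 0 := by
  induction n with
  | zero => simp [qqPoch_zero]
  | succ m ih => rw [qqPoch_succ]; exact mul_ne_zero ih (sub_pow_ne m.succ_ne_zero)

lemma qN_mul (n : ℕ) : qN n * (1 - RatFunc.X) = 1 - RatFunc.X ^ n := by
  have : (qIntP n) * (1 - X) = 1 - X ^ n := by
    have := geom_sum_mul (X : Polynomial ℚ) n
    rw [qIntP]; ring_nf; ring_nf at this; linear_combination -this
  have := congrArg (algebraMap (Polynomial ℚ) (RatFunc ℚ)) this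
  simpa [map_mul, map_sub, map_pow, qN] using this

lemma qN_ne {n : ℕ} (hn : n ≠ 0) : qN n ≠ 0 := by
  intro h
  have : (1 : RatFunc ℚ) - RatFunc.X ^ n = 0 := by rw [← qN_mul, h, zero_mul]
  exact sub_pow_ne hn this

def Dd (m k : ℕ) : RatFunc ℚ := qqPoch (m+k) * qqPoch (m-k) / qqPoch m ^ 2
def cc (k : ℕ) : RatFunc ℚ := (-1)^k * (1 + RatFunc.X^k) * (RatFunc.X ^ (k + k.choose 2))⁻¹
def aa (k : ℕ) : RatFunc ℚ :=
  (-1)^k * (1 + RatFunc.X^k) * (RatFunc.X ^ (k.choose 2))⁻¹ / qN k ^ 2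
def LL (k : ℕ) : RatFunc ℚ :=
  (-1)^k * (1 + 3*RatFunc.X^k + RatFunc.X^(2*k)) * (RatFunc.X ^ (k.choose 2))⁻¹ /
    ((1 + RatFunc.X^k) * qN k ^ 2) * (qqPoch (2*k) / qqPoch k ^ 2)

lemma Dd_ne (m k : ℕ) : Dd m k ≠ 0 := by
  unfold Dd
  exact div_ne_zero (mul_ne_zero (qqPoch_ne _) (qqPoch_ne _)) (pow_ne_zero _ (qqPoch_ne _))

lemma Dd_zero (m : ℕ) : Dd m 0 = 1 := by
  unfold Dd; rw [Nat.add_zero, Nat.sub_zero, sq]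
  exact div_self (mul_ne_zero (qqPoch_ne _) (qqPoch_ne _))

lemma Xpow_ne (e : ℕ) : (RatFunc.X : RatFunc ℚ) ^ e ≠ 0 := pow_ne_zero _ RatFunc.X_ne_zero

lemma innerTel (m : ℕ) : ∀ j, j ≤ m → 1 + ∑ k ∈ Icc 1 j, cc k * Dd m k
    = (-1)^j * ((RatFunc.X : RatFunc ℚ) ^ ((j+1).choose 2))⁻¹ * Dd m j *
      (1 - RatFunc.X ^ (m+j+1)) / (1 - RatFunc.X ^ (m+1)) := by
  intro j
  induction j with
  | zero =>
    intro _
    rw [show Finset.Icc 1 0 = (∅ : Finset ℕ) from rfl, Finset.sum_empty, Dd_zero]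
    norm_num
    rw [show m + 0 + 1 = m + 1 from by omega, div_self (sub_pow_ne (Nat.succ_ne_zero m))]
  | succ j ih =>
    intro hjm
    have ihj := ih (by omega)
    rw [Finset.sum_Icc_succ_top (by omega : 1 ≤ j + 1), ← add_assoc, ihj]
    obtain ⟨t, rfl⟩ : ∃ t, m = j + 1 + t := ⟨m - (j+1), by omega⟩
    have hD1 : Dd (j+1+t) j
        = qqPoch ((j+1+t)+j) * (qqPoch t * (1 - RatFunc.X ^ (t+1))) / qqPoch (j+1+t) ^ 2 := by
      unfold Dd
      rw [show j+1+t - j = t+1 from by omega, qqPoch_succ]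
    have hD2 : Dd (j+1+t) (j+1)
        = qqPoch ((j+1+t)+j) * (1 - RatFunc.X ^ ((j+1+t)+j+1)) * qqPoch t / qqPoch (j+1+t) ^ 2 := by
      unfold Dd
      rw [show (j+1+t)+(j+1) = ((j+1+t)+j)+1 from by omega,
        show j+1+t-(j+1) = t from by omega, qqPoch_succ]
    have hch : (j+1+1).choose 2 = (j+1).choose 2 + (j+1) := by
      rw [Nat.choose_succ_succ (j+1) 1, Nat.choose_one_right, Nat.add_comm]
    have hcc : cc (j+1) = (-1)^(j+1) * (1 + RatFunc.X^(j+1)) *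
        ((RatFunc.X : RatFunc ℚ) ^ ((j+1) + (j+1).choose 2))⁻¹ := rfl
    rw [hD1, hD2, hcc, hch]
    have e5 : (RatFunc.X : RatFunc ℚ) ^ ((j+1+t)+j+1)
        = RatFunc.X^j * RatFunc.X^j * RatFunc.X^t * RatFunc.X * RatFunc.X := by ring
    have e6 : (RatFunc.X : RatFunc ℚ) ^ ((j+1+t)+(j+1)+1)
        = RatFunc.X^j * RatFunc.X^j * RatFunc.X^t * RatFunc.X * RatFunc.X * RatFunc.X := by ring
    have e7 : (RatFunc.X : RatFunc ℚ) ^ ((j+1+t)+1)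
        = RatFunc.X^j * RatFunc.X^t * RatFunc.X * RatFunc.X := by ring
    have e4 : (RatFunc.X : RatFunc ℚ) ^ (t+1) = RatFunc.X^t * RatFunc.X := by
      rw [pow_add, pow_one]
    have e8 : (RatFunc.X : RatFunc ℚ) ^ (j+1) = RatFunc.X^j * RatFunc.X := by
      rw [pow_add, pow_one]
    have e9 : (RatFunc.X : RatFunc ℚ) ^ ((j+1) + (j+1).choose 2)
        = RatFunc.X^((j+1).choose 2) * RatFunc.X^j * RatFunc.X := by ring
    have e10 : (RatFunc.X : RatFunc ℚ) ^ ((j+1).choose 2 + (j+1))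
        = RatFunc.X^((j+1).choose 2) * RatFunc.X^j * RatFunc.X := by ring
    have h4 : (1:RatFunc ℚ) - RatFunc.X^t * RatFunc.X ≠ 0 :=
      e4 ▸ sub_pow_ne (by omega : t+1 ≠ 0)
    have h5 : (1:RatFunc ℚ) - RatFunc.X^j * RatFunc.X^j * RatFunc.X^t * RatFunc.X * RatFunc.X ≠ 0 :=
      e5 ▸ sub_pow_ne (by omega : (j+1+t)+j+1 ≠ 0)
    have h6 : (1:RatFunc ℚ) - RatFunc.X^j * RatFunc.X^t * RatFunc.X * RatFunc.X ≠ 0 :=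
      e7 ▸ sub_pow_ne (by omega : (j+1+t)+1 ≠ 0)
    have h1 : qqPoch ((j+1+t)+j) ≠ 0 := qqPoch_ne _
    have h2 : qqPoch t ≠ 0 := qqPoch_ne _
    have h3 : qqPoch (j+1+t) ≠ 0 := qqPoch_ne _
    have ha : (RatFunc.X : RatFunc ℚ) ^ j ≠ 0 := Xpow_ne _
    have hb : (RatFunc.X : RatFunc ℚ) ^ t ≠ 0 := Xpow_ne _
    have hc : (RatFunc.X : RatFunc ℚ) ^ ((j+1).choose 2) ≠ 0 := Xpow_ne _
    have hx : (RatFunc.X : RatFunc ℚ) ≠ 0 := RatFunc.X_ne_zero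
    rw [e5, e6, e7, e4, e8, e9, e10]
    clear ihj ih hD1 hD2 hch hcc e4 e5 e6 e7 e8 e9 e10 hjm
    generalize qqPoch ((j+1+t)+j) = p1 at h1 ⊢
    generalize qqPoch t = p2 at h2 ⊢
    generalize qqPoch (j+1+t) = p3 at h3 ⊢
    generalize (RatFunc.X : RatFunc ℚ) ^ ((j+1).choose 2) = c at hc ⊢
    generalize (RatFunc.X : RatFunc ℚ) ^ j = a at ha h5 h6 ⊢
    generalize (RatFunc.X : RatFunc ℚ) ^ t = b at hb h4 h5 h6 ⊢
    have hbig : (-(b * RatFunc.X ^ 3 * a ^ 2 * c ^ 2 * p3 ^ 4) + RatFunc.X * a * c ^ 2 * p3 ^ 4)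
        ≠ 0 := by
      have h' := mul_ne_zero (mul_ne_zero (mul_ne_zero (mul_ne_zero hx ha)
        (pow_ne_zero 2 hc)) (pow_ne_zero 4 h3)) h6
      intro hh
      exact h' (by linear_combination hh)
    have h6' : (1:RatFunc ℚ) - b * RatFunc.X ^ 2 * a ≠ 0 := by
      intro hh; exact h6 (by linear_combination hh)
    field_simp
    ring

lemma one_sub_X_ne : (1 : RatFunc ℚ) - RatFunc.X ≠ 0 := by
  have := sub_pow_ne (one_ne_zero (α := ℕ))
  simpa using this

lemma qN_eq (n : ℕ) : qN n = (1 - RatFunc.X ^ n) / (1 - RatFunc.X) := by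
  rw [eq_div_iff one_sub_X_ne]; exact qN_mul n

lemma diff (k n : ℕ) (hk1 : 1 ≤ k) (hk2 : k ≤ n) :
    aa k * (Dd (n+1) k - Dd n k)
      = -(RatFunc.X^(n+1) / qN (n+1)^2) * (cc k * Dd n k) := by
  obtain ⟨s, rfl⟩ : ∃ s, n = k + s := ⟨n - k, by omega⟩
  have hD1 : Dd (k+s+1) k
      = qqPoch (k+s+k) * (1 - RatFunc.X^(k+s+k+1)) * (qqPoch s * (1 - RatFunc.X^(s+1))) /
        (qqPoch (k+s) * (1 - RatFunc.X^(k+s+1)))^2 := by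
    unfold Dd
    rw [show (k+s+1)+k = (k+s+k)+1 from by omega, show (k+s+1) - k = s+1 from by omega,
      qqPoch_succ, qqPoch_succ, qqPoch_succ]
  have hD0 : Dd (k+s) k = qqPoch (k+s+k) * qqPoch s / qqPoch (k+s)^2 := by
    unfold Dd; rw [show k+s-k = s from by omega]
  have hcc : cc k = (-1)^k * (1 + RatFunc.X^k) *
      ((RatFunc.X : RatFunc ℚ)^k * RatFunc.X^(k.choose 2))⁻¹ := by
    unfold cc; rw [pow_add]
  unfold aa
  rw [hD1, hD0, hcc, qN_eq k, qN_eq (k+s+1)]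
  have e1 : (RatFunc.X : RatFunc ℚ) ^ (k+s+k+1)
      = RatFunc.X^k * RatFunc.X^k * RatFunc.X^s * RatFunc.X := by ring
  have e2 : (RatFunc.X : RatFunc ℚ) ^ (s+1) = RatFunc.X^s * RatFunc.X := by ring
  have e3 : (RatFunc.X : RatFunc ℚ) ^ (k+s+1) = RatFunc.X^k * RatFunc.X^s * RatFunc.X := by ring
  have h1 : (1:RatFunc ℚ) - RatFunc.X^k * RatFunc.X^k * RatFunc.X^s * RatFunc.X ≠ 0 :=
    e1 ▸ sub_pow_ne (by omega : k+s+k+1 ≠ 0)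
  have h2 : (1:RatFunc ℚ) - RatFunc.X^k * RatFunc.X^s * RatFunc.X ≠ 0 :=
    e3 ▸ sub_pow_ne (by omega : k+s+1 ≠ 0)
  have h3 : (1:RatFunc ℚ) - RatFunc.X^k ≠ 0 := sub_pow_ne (by omega)
  have h4 : (1:RatFunc ℚ) - RatFunc.X ≠ 0 := one_sub_X_ne
  have hp1 : qqPoch (k+s+k) ≠ 0 := qqPoch_ne _
  have hp2 : qqPoch s ≠ 0 := qqPoch_ne _
  have hp3 : qqPoch (k+s) ≠ 0 := qqPoch_ne _
  have ha : (RatFunc.X : RatFunc ℚ)^k ≠ 0 := Xpow_ne _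
  have hb : (RatFunc.X : RatFunc ℚ)^s ≠ 0 := Xpow_ne _
  have hc : (RatFunc.X : RatFunc ℚ)^(k.choose 2) ≠ 0 := Xpow_ne _
  have hx : (RatFunc.X : RatFunc ℚ) ≠ 0 := RatFunc.X_ne_zero
  rw [e1, e2, e3]
  generalize qqPoch (k+s+k) = p1 at hp1 ⊢
  generalize qqPoch s = p2 at hp2 ⊢
  generalize qqPoch (k+s) = p3 at hp3 ⊢
  generalize (RatFunc.X : RatFunc ℚ) ^ (k.choose 2) = c at hc ⊢
  generalize (RatFunc.X : RatFunc ℚ) ^ k = a at ha h1 h2 h3 ⊢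
  generalize (RatFunc.X : RatFunc ℚ) ^ s = b at hb h1 h2 ⊢
  have h2' : (1:RatFunc ℚ) - a * RatFunc.X * b ≠ 0 := by
    intro hh; exact h2 (by linear_combination hh)
  field_simp
  ring

set_option maxHeartbeats 2000000 in
lemma final (n : ℕ) :
    LL (n+1) = -(RatFunc.X^(n+1) / qN (n+1)^2) *
        ((-1)^n * ((RatFunc.X : RatFunc ℚ) ^ ((n+1).choose 2))⁻¹ * Dd n n *
          (1 - RatFunc.X ^ (n+n+1)) / (1 - RatFunc.X ^ (n+1)) - 1)
      + aa (n+1) * Dd (n+1) (n+1) - RatFunc.X^(n+1) / qN (n+1)^2 := by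
  have hq2 : qqPoch (2*(n+1))
      = qqPoch (n+n) * (1 - RatFunc.X^(n+n+1)) * (1 - RatFunc.X^(n+n+2)) := by
    rw [show 2*(n+1) = (n+n+1)+1 from by omega, qqPoch_succ, show n+n+1 = (n+n)+1 from by omega,
      qqPoch_succ, show (n+n)+1+1 = n+n+2 from by omega, show (n+n)+1 = n+n+1 from by omega]
  have hDnn : Dd n n = qqPoch (n+n) / qqPoch n ^ 2 := by
    unfold Dd; rw [Nat.sub_self, qqPoch_zero, mul_one]
  have hDn1 : Dd (n+1) (n+1) = qqPoch (n+n) * (1 - RatFunc.X^(n+n+1)) * (1 - RatFunc.X^(n+n+2)) /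
      (qqPoch n * (1 - RatFunc.X^(n+1))) ^ 2 := by
    unfold Dd
    rw [Nat.sub_self, qqPoch_zero, mul_one, show (n+1)+(n+1) = 2*(n+1) from by omega, hq2,
      qqPoch_succ]
  unfold LL aa
  rw [hq2, hDnn, hDn1, qN_eq (n+1), qqPoch_succ]
  have e1 : (RatFunc.X : RatFunc ℚ) ^ (n+1) = RatFunc.X^n * RatFunc.X := by ring
  have e2 : (RatFunc.X : RatFunc ℚ) ^ (2*(n+1))
      = RatFunc.X^n * RatFunc.X^n * RatFunc.X * RatFunc.X := by ring
  have e3 : (RatFunc.X : RatFunc ℚ) ^ (n+n+1) = RatFunc.X^n * RatFunc.X^n * RatFunc.X := by ring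
  have e4 : (RatFunc.X : RatFunc ℚ) ^ (n+n+2)
      = RatFunc.X^n * RatFunc.X^n * RatFunc.X * RatFunc.X := by ring
  have h1 : (1:RatFunc ℚ) - RatFunc.X^n * RatFunc.X ≠ 0 :=
    e1 ▸ sub_pow_ne (by omega : n+1 ≠ 0)
  have h1' : (1:RatFunc ℚ) + RatFunc.X^n * RatFunc.X ≠ 0 := e1 ▸ add_pow_ne (n+1)
  have h3 : (1:RatFunc ℚ) - RatFunc.X^n * RatFunc.X^n * RatFunc.X ≠ 0 :=
    e3 ▸ sub_pow_ne (by omega : n+n+1 ≠ 0)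
  have h4 : (1:RatFunc ℚ) - RatFunc.X^n * RatFunc.X^n * RatFunc.X * RatFunc.X ≠ 0 :=
    e4 ▸ sub_pow_ne (by omega : n+n+2 ≠ 0)
  have h5 : (1:RatFunc ℚ) - RatFunc.X ≠ 0 := one_sub_X_ne
  have hp1 : qqPoch (n+n) ≠ 0 := qqPoch_ne _
  have hp2 : qqPoch n ≠ 0 := qqPoch_ne _
  have hc : (RatFunc.X : RatFunc ℚ)^((n+1).choose 2) ≠ 0 := Xpow_ne _
  have hu : (RatFunc.X : RatFunc ℚ)^n ≠ 0 := Xpow_ne _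
  have hx : (RatFunc.X : RatFunc ℚ) ≠ 0 := RatFunc.X_ne_zero
  rw [e1, e2, e3, e4]
  generalize qqPoch (n+n) = p1 at hp1 ⊢
  generalize qqPoch n = p2 at hp2 ⊢
  generalize (RatFunc.X : RatFunc ℚ) ^ ((n+1).choose 2) = c at hc ⊢
  generalize (RatFunc.X : RatFunc ℚ) ^ n = u at hu h1 h1' h3 h4 ⊢
  have r1 : (1 - u*RatFunc.X) * (1 - u*RatFunc.X)⁻¹ = 1 := mul_inv_cancel₀ h1
  have r2 : (1 + u*RatFunc.X) * (1 + u*RatFunc.X)⁻¹ = 1 := mul_inv_cancel₀ h1'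
  simp only [div_eq_mul_inv, mul_inv, ← inv_pow, inv_inv, mul_pow]
  linear_combination
    (-(-1:RatFunc ℚ)^n*(1-RatFunc.X)^2*p1*(1-u*u*RatFunc.X)*(p2⁻¹)^2*c⁻¹*(u*RatFunc.X)*
      ((1-u*RatFunc.X)⁻¹)^3) * r1 +
    (-(-1:RatFunc ℚ)^n*(1-RatFunc.X)^2*p1*(1-u*u*RatFunc.X)*(p2⁻¹)^2*c⁻¹*
      (1+3*(u*RatFunc.X)+(u*RatFunc.X)^2)*(1-u*RatFunc.X)*((1-u*RatFunc.X)⁻¹)^4) * r2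

lemma main (n : ℕ) : ∑ k ∈ Icc 1 n, LL k
    = ∑ k ∈ Icc 1 n, aa k * Dd n k - ∑ k ∈ Icc 1 n, RatFunc.X ^ k / qN k ^ 2 := by
  induction n with
  | zero => simp [show Finset.Icc 1 0 = (∅ : Finset ℕ) from rfl]
  | succ n ih =>
    rw [Finset.sum_Icc_succ_top (by omega : 1 ≤ n+1), Finset.sum_Icc_succ_top (by omega : 1 ≤ n+1),
      Finset.sum_Icc_succ_top (by omega : 1 ≤ n+1), ih]
    have hdiff : ∑ k ∈ Icc 1 n, aa k * Dd (n+1) k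
        = ∑ k ∈ Icc 1 n, (aa k * Dd n k - RatFunc.X^(n+1) / qN (n+1)^2 * (cc k * Dd n k)) := by
      refine Finset.sum_congr rfl fun k hk => ?_
      obtain ⟨hk1, hk2⟩ := Finset.mem_Icc.mp hk
      linear_combination diff k n hk1 hk2
    rw [hdiff, Finset.sum_sub_distrib, ← Finset.mul_sum]
    linear_combination final n + (RatFunc.X^(n+1) / qN (n+1)^2) * innerTel n n le_rfl

lemma qbin2k (k : ℕ) : qbin (2*k) k = qqPoch (2*k) / qqPoch k ^ 2 := by
  unfold qbin
  rw [if_pos (by omega : k ≤ 2*k), show 2*k-k = k from by omega, ← sq]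

lemma qbin_ratio (n k : ℕ) (hk : k ≤ n) : qbin (n+k) k * (qbin n k)⁻¹ = Dd n k := by
  unfold qbin Dd
  rw [if_pos (by omega : k ≤ n+k), if_pos hk, show n+k-k = n from by omega]
  have h1 := qqPoch_ne (n+k)
  have h2 := qqPoch_ne (n-k)
  have h3 := qqPoch_ne n
  have h4 := qqPoch_ne k
  field_simp

/-- For every positive integer `n`, the identity of rational functions:
`∑_{k=1}^{n} ((-1)^k (1+3q^k+q^{2k}) q^{−C(k,2)}/((1+q^k) [k]_q²)) binom_q(2k,k)
  = ∑_{k=1}^{n} ((-1)^k (1+q^k) q^{−C(k,2)}/[k]_q²) binom_q(n+k,k) binom_q(n,k)⁻¹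
    − ∑_{k=1}^{n} q^k/[k]_q²`. -/
theorem qid4 (n : ℕ) (hn : 0 < n) :
    ∑ k ∈ Finset.Icc 1 n,
        (-1 : RatFunc ℚ) ^ k * (1 + 3 * RatFunc.X ^ k + RatFunc.X ^ (2 * k)) *
          (RatFunc.X : RatFunc ℚ) ^ (-(k.choose 2 : ℤ)) /
            ((1 + RatFunc.X ^ k) * qN k ^ 2) * qbin (2 * k) k
      = ∑ k ∈ Finset.Icc 1 n,
          (-1 : RatFunc ℚ) ^ k * (1 + RatFunc.X ^ k) *
            (RatFunc.X : RatFunc ℚ) ^ (-(k.choose 2 : ℤ)) / qN k ^ 2 *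
              qbin (n + k) k * (qbin n k)⁻¹
        - ∑ k ∈ Finset.Icc 1 n, (RatFunc.X : RatFunc ℚ) ^ k / qN k ^ 2 := by
  have hL : ∀ k ∈ Finset.Icc 1 n,
      (-1 : RatFunc ℚ) ^ k * (1 + 3 * RatFunc.X ^ k + RatFunc.X ^ (2 * k)) *
          (RatFunc.X : RatFunc ℚ) ^ (-(k.choose 2 : ℤ)) /
            ((1 + RatFunc.X ^ k) * qN k ^ 2) * qbin (2 * k) k = LL k := by
    intro k hk
    rw [qbin2k]
    unfold LL
    rw [zpow_neg, zpow_natCast]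
  have hR : ∀ k ∈ Finset.Icc 1 n,
      (-1 : RatFunc ℚ) ^ k * (1 + RatFunc.X ^ k) *
          (RatFunc.X : RatFunc ℚ) ^ (-(k.choose 2 : ℤ)) / qN k ^ 2 *
            qbin (n + k) k * (qbin n k)⁻¹ = aa k * Dd n k := by
    intro k hk
    rw [mul_assoc, qbin_ratio n k (Finset.mem_Icc.mp hk).2]
    unfold aa
    rw [zpow_neg, zpow_natCast]
  rw [Finset.sum_congr rfl hL, Finset.sum_congr rfl hR]
  exact main n
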